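/- Core of Proposition 3 (insecurity under reused randomness): for all s₁, s₂ : Fin n → ZMod 2, setting U = X^{s₂} * H^{⊗n} * X^{s₁} and c = s₁ + s₂, one has U * U = χ(s₁, c) • (X^c * Z^c); consequently, for every complex matrix σ indexed by I = (Fin n → ZMod 2), (U*U) * σ * (U*U)ᴴ = (X^c * Z^c) * σ * (X^c * Z^c)ᴴ. (Encrypting a ciphertext again with the same randomness yields the weak one-key scheme [[p_c = 1/2^n, X^c Z^c]].) -/
import Mathlib


open Matrix BigOperators

/-- The inner product `a ⊙ b = ∑ i, a i * b i` in `ZMod 2`. -/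
def bdot {n : ℕ} (a b : Fin n → ZMod 2) : ZMod 2 := ∑ i, a i * b i

/-- `χ(a,b) = (-1)^(a ⊙ b)` as a complex number. -/
noncomputable def chi {n : ℕ} (a b : Fin n → ZMod 2) : ℂ :=
  if bdot a b = 1 then -1 else 1

/-- The `n`-qubit Pauli string `X^a`: `|v⟩ ↦ |v ⊕ a⟩`. -/
noncomputable def PX {n : ℕ} (a : Fin n → ZMod 2) :
    Matrix (Fin n → ZMod 2) (Fin n → ZMod 2) ℂ :=
  fun u v => if u = v + a then 1 else 0

/-- The `n`-qubit Pauli string `Z^b`: `|v⟩ ↦ (-1)^(b ⊙ v) |v⟩`. -/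
noncomputable def PZ {n : ℕ} (b : Fin n → ZMod 2) :
    Matrix (Fin n → ZMod 2) (Fin n → ZMod 2) ℂ :=
  fun u v => if u = v then chi b v else 0

/-- The `n`-qubit Hadamard transform `H^{⊗n}`. -/
noncomputable def Hn (n : ℕ) :
    Matrix (Fin n → ZMod 2) (Fin n → ZMod 2) ℂ :=
  fun u v => (Real.sqrt (2 ^ n) : ℂ)⁻¹ * chi u v


noncomputable def Esgn : ZMod 2 → ℂ := fun x => if x = 1 then -1 else 1

lemma chi_eq {n : ℕ} (a b : Fin n → ZMod 2) : chi a b = Esgn (bdot a b) := rfl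

lemma Esgn_add (x y : ZMod 2) : Esgn (x + y) = Esgn x * Esgn y := by
  have hx : x = 0 ∨ x = 1 := by revert x; decide
  have hy : y = 0 ∨ y = 1 := by revert y; decide
  rcases hx with rfl | rfl <;> rcases hy with rfl | rfl <;>
    simp [Esgn, show (1 + 1 : ZMod 2) = 0 by decide]

lemma pi_add_self {n : ℕ} (a : Fin n → ZMod 2) : a + a = 0 := by
  funext i
  have : ∀ x : ZMod 2, x + x = 0 := by decide
  exact this (a i)

lemma pi_eq_shift {n : ℕ} (u w a : Fin n → ZMod 2) : u = w + a ↔ w = u + a := by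
  constructor <;> rintro rfl <;> rw [add_assoc, pi_add_self, add_zero]

lemma pi_add_eq_zero_iff {n : ℕ} (a b : Fin n → ZMod 2) : a + b = 0 ↔ a = b := by
  constructor
  · intro h
    have := congrArg (· + b) h
    simpa [add_assoc, pi_add_self] using this
  · rintro rfl; exact pi_add_self _

lemma PX_mul_apply {n : ℕ} (a : Fin n → ZMod 2)
    (M : Matrix (Fin n → ZMod 2) (Fin n → ZMod 2) ℂ) (u v : Fin n → ZMod 2) :
    (PX a * M) u v = M (u + a) v := by
  rw [Matrix.mul_apply]
  simp only [PX, ite_mul, one_mul, zero_mul]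
  simp_rw [pi_eq_shift u _ a]
  simp

lemma mul_PX_apply {n : ℕ} (M : Matrix (Fin n → ZMod 2) (Fin n → ZMod 2) ℂ)
    (a : Fin n → ZMod 2) (u v : Fin n → ZMod 2) :
    (M * PX a) u v = M u (v + a) := by
  rw [Matrix.mul_apply]
  simp only [PX, mul_ite, mul_one, mul_zero]
  simp

lemma mul_PZ_apply {n : ℕ} (M : Matrix (Fin n → ZMod 2) (Fin n → ZMod 2) ℂ)
    (b : Fin n → ZMod 2) (u v : Fin n → ZMod 2) :
    (M * PZ b) u v = M u v * chi b v := by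
  rw [Matrix.mul_apply]
  simp only [PZ, mul_ite, mul_zero]
  simp

lemma chi_sum {n : ℕ} (t : Fin n → ZMod 2) :
    ∑ w : Fin n → ZMod 2, chi w t = if t = 0 then ((2 : ℂ) ^ n) else 0 := by
  split
  · next h =>
    subst h
    have : ∀ w : Fin n → ZMod 2, chi w 0 = 1 := by
      intro w; simp [chi, bdot]
    simp [this, Finset.card_univ]
  · next ht =>
    obtain ⟨i, hi⟩ : ∃ i, t i ≠ 0 := by
      by_contra h
      push_neg at h
      exact ht (funext h)
    have hti : t i = 1 := by
      revert hi; generalize t i = x; revert x; decide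
    set e : Fin n → ZMod 2 := fun j => if j = i then 1 else 0 with he
    have hbe : bdot e t = 1 := by
      simp only [bdot, he, ite_mul, one_mul, zero_mul]
      rw [Finset.sum_ite_eq' Finset.univ i t]
      simp [hti]
    have key : ∀ w, chi (w + e) t = - chi w t := by
      intro w
      have hb : bdot (w + e) t = bdot w t + 1 := by
        simp only [bdot, Pi.add_apply, add_mul, Finset.sum_add_distrib]
        rw [show ∑ j, e j * t j = bdot e t from rfl, hbe]
      rw [chi_eq, hb, Esgn_add, chi_eq]
      simp [Esgn]
    have hsum : ∑ w : Fin n → ZMod 2, chi (w + e) t = ∑ w : Fin n → ZMod 2, chi w t :=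
      Equiv.sum_comp (Equiv.addRight e) (fun w => chi w t)
    rw [Finset.sum_congr rfl (fun w _ => key w)] at hsum
    rw [Finset.sum_neg_distrib] at hsum
    linear_combination (-1/2 : ℂ) * hsum

lemma bdot_key1 {n : ℕ} (u v w s₁ s₂ : Fin n → ZMod 2) :
    bdot (u + s₂) (w + s₁) + bdot (w + s₂) (v + s₁) =
      bdot w (u + v + s₁ + s₂) + (bdot (u + s₂) s₁ + bdot s₂ (v + s₁)) := by
  simp only [bdot, Pi.add_apply, ← Finset.sum_add_distrib]
  refine Finset.sum_congr rfl fun i _ => ?_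
  generalize u i = a; generalize v i = b; generalize w i = c
  generalize s₁ i = d; generalize s₂ i = e
  revert a b c d e; decide

lemma bdot_key2 {n : ℕ} (v s₁ s₂ : Fin n → ZMod 2) :
    bdot (v + (s₁ + s₂) + s₂) s₁ + bdot s₂ (v + s₁) =
      bdot s₁ (s₁ + s₂) + bdot (s₁ + s₂) v := by
  simp only [bdot, Pi.add_apply, ← Finset.sum_add_distrib]
  refine Finset.sum_congr rfl fun i _ => ?_
  generalize v i = b; generalize s₁ i = d; generalize s₂ i = e
  revert b d e; decide

theorem reused_randomness_insecure (n : ℕ) (s₁ s₂ : Fin n → ZMod 2) :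
    (PX s₂ * Hn n * PX s₁) * (PX s₂ * Hn n * PX s₁) =
        chi s₁ (s₁ + s₂) • (PX (s₁ + s₂) * PZ (s₁ + s₂)) ∧
      ∀ σ : Matrix (Fin n → ZMod 2) (Fin n → ZMod 2) ℂ,
        ((PX s₂ * Hn n * PX s₁) * (PX s₂ * Hn n * PX s₁)) * σ *
            ((PX s₂ * Hn n * PX s₁) * (PX s₂ * Hn n * PX s₁))ᴴ =
          (PX (s₁ + s₂) * PZ (s₁ + s₂)) * σ * (PX (s₁ + s₂) * PZ (s₁ + s₂))ᴴ := by
  set q : ℂ := ((Real.sqrt (2 ^ n) : ℝ) : ℂ) with hq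
  have hqne : q ≠ 0 := by
    rw [hq]
    exact_mod_cast (Real.sqrt_pos.mpr (by positivity)).ne'
  have hcsq : q * q = (2 : ℂ) ^ n := by
    rw [hq, ← Complex.ofReal_mul, Real.mul_self_sqrt (by positivity)]
    push_cast; ring
  have hq1 : q⁻¹ * q⁻¹ * ((2 : ℂ) ^ n) = 1 := by
    rw [← hcsq]; field_simp
  have hU : ∀ u v, (PX s₂ * Hn n * PX s₁) u v = q⁻¹ * chi (u + s₂) (v + s₁) := by
    intro u v
    rw [mul_PX_apply, PX_mul_apply]; rfl
  have hmain : (PX s₂ * Hn n * PX s₁) * (PX s₂ * Hn n * PX s₁) =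
      chi s₁ (s₁ + s₂) • (PX (s₁ + s₂) * PZ (s₁ + s₂)) := by
    ext u v
    rw [Matrix.mul_apply]
    simp_rw [hU]
    have hterm : ∀ w : Fin n → ZMod 2,
        chi (u + s₂) (w + s₁) * chi (w + s₂) (v + s₁)
          = chi w (u + v + s₁ + s₂) * (chi (u + s₂) s₁ * chi s₂ (v + s₁)) := by
      intro w
      simp only [chi_eq, ← Esgn_add, bdot_key1]
    have hL : ∑ w : Fin n → ZMod 2,
          (q⁻¹ * chi (u + s₂) (w + s₁)) * (q⁻¹ * chi (w + s₂) (v + s₁))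
        = q⁻¹ * q⁻¹ * (chi (u + s₂) s₁ * chi s₂ (v + s₁))
            * ∑ w : Fin n → ZMod 2, chi w (u + v + s₁ + s₂) := by
      rw [Finset.mul_sum]
      refine Finset.sum_congr rfl fun w _ => ?_
      linear_combination q⁻¹ * q⁻¹ * hterm w
    have hR : (PX (s₁ + s₂) * PZ (s₁ + s₂)) u v
        = if u + v + s₁ + s₂ = 0 then chi (s₁ + s₂) v else 0 := by
      rw [PX_mul_apply]
      have hiff : (u + (s₁ + s₂) = v) ↔ (u + v + s₁ + s₂ = 0) := by
        rw [← pi_add_eq_zero_iff (u + (s₁ + s₂)) v]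
        constructor <;> intro h <;> [skip; skip] <;> rw [← h] <;> ring
      simp only [PZ]
      rw [if_congr hiff rfl rfl]
    rw [hL, chi_sum, Matrix.smul_apply, hR, smul_eq_mul]
    by_cases h : u + v + s₁ + s₂ = 0
    · rw [if_pos h, if_pos h]
      have hu : u = v + (s₁ + s₂) := by
        have h' : u + (v + (s₁ + s₂)) = 0 := by rw [← h]; ring
        exact (pi_add_eq_zero_iff _ _).mp h'
      subst hu
      rw [show q⁻¹ * q⁻¹ * (chi (v + (s₁ + s₂) + s₂) s₁ * chi s₂ (v + s₁)) * (2:ℂ)^n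
            = (q⁻¹ * q⁻¹ * (2:ℂ)^n) * (chi (v + (s₁ + s₂) + s₂) s₁ * chi s₂ (v + s₁)) by ring,
        hq1, one_mul]
      simp only [chi_eq, ← Esgn_add, bdot_key2]
    · rw [if_neg h, if_neg h, mul_zero, mul_zero]
  refine ⟨hmain, fun σ => ?_⟩
  rw [hmain, Matrix.conjTranspose_smul, Matrix.smul_mul, Matrix.mul_smul,
    Matrix.smul_mul, smul_smul]
  have hss : star (chi s₁ (s₁ + s₂)) * chi s₁ (s₁ + s₂) = 1 := by
    unfold chi; split_ifs <;> simp
  rw [hss, one_smul]
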